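/- If for all nodes j one has (X_j − X'_j)^{-1} > ∑_{ℓ=1}^N B_{j,ℓ}, then the matrix H − X^{-1} is negative definite, where H_{j,ℓ} = B_{j,ℓ} cos(δ_ℓ − δ_j) and X is the diagonal matrix with entries X_j − X'_j. -/
import Mathlib


open Matrix

/-- If `(X_j - X'_j)⁻¹ > ∑_ℓ B_{j,ℓ}` for all nodes `j`, then the matrix `H - X⁻¹`,
with `H_{j,ℓ} = B_{j,ℓ} cos(δ_ℓ - δ_j)` and `X = diag(X_j - X'_j)`, is negative definite. -/
theorem stmt_8 (N : ℕ) (B : Matrix (Fin N) (Fin N) ℝ) (hBsymm : Bᵀ = B)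
    (hBnn : ∀ j ℓ, 0 ≤ B j ℓ) (δ X X' : Fin N → ℝ) (hX : ∀ j, X' j < X j)
    (hcond : ∀ j, (∑ ℓ, B j ℓ) < (X j - X' j)⁻¹) :
    ∀ y : Fin N → ℝ, y ≠ 0 →
      y ⬝ᵥ ((Matrix.of fun j ℓ => B j ℓ * Real.cos (δ ℓ - δ j)) -
        Matrix.diagonal fun j => (X j - X' j)⁻¹).mulVec y < 0 := by
  intro y hy
  have hsym : ∀ j ℓ, B ℓ j = B j ℓ := fun j ℓ => congrFun (congrFun hBsymm j) ℓ
  rw [Matrix.sub_mulVec, dotProduct_sub, sub_neg]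
  have hdiag : y ⬝ᵥ (Matrix.diagonal fun j => (X j - X' j)⁻¹).mulVec y
      = ∑ j, (X j - X' j)⁻¹ * (y j) ^ 2 := by
    simp [dotProduct, Matrix.mulVec_diagonal]
    exact Finset.sum_congr rfl fun j _ => by ring
  have h1 : y ⬝ᵥ (Matrix.of fun j ℓ => B j ℓ * Real.cos (δ ℓ - δ j)).mulVec y
      ≤ ∑ j, ∑ ℓ, B j ℓ * ((y j) ^ 2 + (y ℓ) ^ 2) / 2 := by
    rw [dotProduct]
    simp only [Matrix.mulVec, dotProduct, Matrix.of_apply, Finset.mul_sum]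
    refine Finset.sum_le_sum fun j _ => Finset.sum_le_sum fun ℓ _ => ?_
    have hc1 := Real.cos_le_one (δ ℓ - δ j)
    have hc2 := Real.neg_one_le_cos (δ ℓ - δ j)
    nlinarith [mul_nonneg (mul_nonneg (hBnn j ℓ) (by linarith : (0:ℝ) ≤ 1 - Real.cos (δ ℓ - δ j))) (sq_nonneg (y j + y ℓ)),
      mul_nonneg (mul_nonneg (hBnn j ℓ) (by linarith : (0:ℝ) ≤ 1 + Real.cos (δ ℓ - δ j))) (sq_nonneg (y j - y ℓ))]
  have h2 : (∑ j, ∑ ℓ, B j ℓ * ((y j) ^ 2 + (y ℓ) ^ 2) / 2)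
      = ∑ j, (∑ ℓ, B j ℓ) * (y j) ^ 2 := by
    have hsplit : ∀ j ℓ, B j ℓ * ((y j) ^ 2 + (y ℓ) ^ 2) / 2
        = B j ℓ * (y j) ^ 2 / 2 + B j ℓ * (y ℓ) ^ 2 / 2 := fun j ℓ => by ring
    simp_rw [hsplit, Finset.sum_add_distrib]
    have hswap : (∑ j, ∑ ℓ, B j ℓ * (y ℓ) ^ 2 / 2) = ∑ j, ∑ ℓ, B j ℓ * (y j) ^ 2 / 2 := by
      rw [Finset.sum_comm]
      exact Finset.sum_congr rfl fun j _ => Finset.sum_congr rfl fun ℓ _ => by rw [hsym j ℓ]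
    rw [hswap, ← Finset.sum_add_distrib]
    refine Finset.sum_congr rfl fun j _ => ?_
    rw [← Finset.sum_add_distrib, Finset.sum_mul]
    exact Finset.sum_congr rfl fun ℓ _ => by ring
  have h3 : (∑ j, (∑ ℓ, B j ℓ) * (y j) ^ 2) < ∑ j, (X j - X' j)⁻¹ * (y j) ^ 2 := by
    obtain ⟨k, hk⟩ := Function.ne_iff.mp hy
    refine Finset.sum_lt_sum (fun j _ => mul_le_mul_of_nonneg_right (le_of_lt (hcond j)) (sq_nonneg _)) ⟨k, Finset.mem_univ k, ?_⟩
    have hk' : y k ≠ 0 := by simpa using hk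
    have hpos : 0 < (y k) ^ 2 := by positivity
    exact mul_lt_mul_of_pos_right (hcond k) hpos
  rw [hdiag]
  calc y ⬝ᵥ (Matrix.of fun j ℓ => B j ℓ * Real.cos (δ ℓ - δ j)).mulVec y
      ≤ ∑ j, (∑ ℓ, B j ℓ) * (y j) ^ 2 := h2 ▸ h1
    _ < ∑ j, (X j - X' j)⁻¹ * (y j) ^ 2 := h3
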